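/- For all n ≥ 6 and every complex irreducible character χ of S_n, the identity χ((3,2))/χ(1) + (6/(n−4))·χ((4))/χ(1) − (n(n−1)/((n−3)(n−4)))·(χ((3))/χ(1))·(χ((2))/χ(1)) + (6/((n−3)(n−4)))·χ((2))/χ(1) = 0 holds, where (3,2), (4), (3), (2) denote the conjugacy classes of the corresponding cycle types. -/

import Mathlib

section Helpers
open CategoryTheory Equiv Equiv.Perm Finset
variable {G : Type} [Group G] [Fintype G] [DecidableEq G]

theorem classsum (V : FDRep ℂ G) [Simple V] (S : Finset G)
    (hS : ∀ g : G, ∀ x ∈ S, g * x * g⁻¹ ∈ S) (y : G) :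
    V.character 1 * ∑ x ∈ S, V.character (x * y)
      = (∑ x ∈ S, V.character x) * V.character y := by
  classical
  set φ := ∑ x ∈ S, V.ρ x with hφ
  have hcomm : ∀ g : G, φ * V.ρ g = V.ρ g * φ := by
    intro g
    rw [hφ, Finset.sum_mul, Finset.mul_sum]
    refine Finset.sum_nbij' (fun x => g⁻¹ * x * g) (fun x => g * x * g⁻¹) ?_ ?_ ?_ ?_ ?_
    · intro x hx; simpa [mul_assoc] using hS g⁻¹ x hx
    · exact fun x hx => hS g x hx
    · intro x hx; group
    · intro x hx; group
    · intro x hx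
      show V.ρ x * V.ρ g = V.ρ g * V.ρ (g⁻¹ * x * g)
      rw [← map_mul, ← map_mul]
      congr 1
      group
  let F : V ⟶ V := ⟨FGModuleCat.ofHom φ, fun g => by ext1; exact hcomm g⟩
  obtain ⟨cst, hcst⟩ := CategoryTheory.endomorphism_simple_eq_smul_id ℂ F
  have hφ' : φ = cst • LinearMap.id := by
    have := congrArg (fun (f : V ⟶ V) => f.hom.hom.hom) hcst
    exact this.symm
  have h1 : (∑ x ∈ S, V.character x) = cst * V.character 1 := by
    have : LinearMap.trace ℂ V φ = cst * V.character 1 := by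
      rw [hφ', map_smul, LinearMap.trace_id, FDRep.char_one]
      simp [smul_eq_mul]
    rw [← this, hφ, map_sum]
    rfl
  have h2 : (∑ x ∈ S, V.character (x * y)) = cst * V.character y := by
    have : LinearMap.trace ℂ V (φ * V.ρ y) = cst * V.character y := by
      rw [hφ', smul_mul_assoc, map_smul, ← Module.End.one_eq_id, one_mul]
      rfl
    rw [← this, hφ, Finset.sum_mul, map_sum]
    refine Finset.sum_congr rfl fun x hx => ?_
    show V.character (x*y) = LinearMap.trace ℂ V (V.ρ x * V.ρ y)
    rw [FDRep.character, map_mul]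
  rw [h1, h2]
  ring

open Equiv Equiv.Perm Finset
open Equiv Equiv.Perm Finset

lemma sum3_odd (m : Multiset ℕ) (h2 : ∀ a ∈ m, 2 ≤ a) (h3 : m.sum ≤ 3)
    (ho : Odd (m.sum + Multiset.card m)) : m = {2} := by
  rcases Multiset.empty_or_exists_mem m with hm | ⟨a, ha⟩
  · rw [hm] at ho; simp at ho
  obtain ⟨m', rfl⟩ := Multiset.exists_cons_of_mem ha
  have ha2 := h2 a (Multiset.mem_cons_self _ _)
  rcases Multiset.empty_or_exists_mem m' with hm' | ⟨b, hb⟩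
  · subst hm'
    simp only [Multiset.sum_cons, Multiset.sum_zero, Multiset.card_cons, Multiset.card_zero,
      add_zero, Nat.odd_iff] at ho h3
    have : a = 2 := by omega
    subst this; rfl
  · obtain ⟨m'', rfl⟩ := Multiset.exists_cons_of_mem hb
    have hb2 := h2 b (by simp)
    simp only [Multiset.sum_cons] at h3
    omega

lemma sum4_odd (m : Multiset ℕ) (h2 : ∀ a ∈ m, 2 ≤ a) (h4 : m.sum = 4)
    (ho : Odd (m.sum + Multiset.card m)) : m = {4} := by
  rcases Multiset.empty_or_exists_mem m with hm | ⟨a, ha⟩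
  · rw [hm] at h4; simp at h4
  obtain ⟨m', rfl⟩ := Multiset.exists_cons_of_mem ha
  have ha2 := h2 a (Multiset.mem_cons_self _ _)
  rcases Multiset.empty_or_exists_mem m' with hm' | ⟨b, hb⟩
  · subst hm'
    simp only [Multiset.sum_cons, Multiset.sum_zero, Multiset.card_cons, Multiset.card_zero,
      add_zero] at h4 ho
    have : a = 4 := by omega
    subst this; rfl
  · exfalso
    obtain ⟨m'', rfl⟩ := Multiset.exists_cons_of_mem hb
    have hb2 := h2 b (by simp)
    simp only [Multiset.sum_cons, Multiset.card_cons] at h4 ho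
    have hm0 : m'' = 0 := by
      refine Multiset.eq_zero_of_forall_notMem fun x hx => ?_
      have := h2 x (by simp [hx])
      have := Multiset.single_le_sum (fun y _ => Nat.zero_le y) x hx
      omega
    subst hm0
    simp only [Multiset.sum_zero, Multiset.card_zero, Nat.odd_iff] at h4 ho
    omega


variable {n : ℕ}

lemma odd_mul {x c : Perm (Fin n)} (hx : x.cycleType = {2}) (hc : c.cycleType = {3}) :
    Odd ((x * c).cycleType.sum + Multiset.card (x * c).cycleType) := by
  have hs : Perm.sign (x * c) = -1 := by
    rw [map_mul, sign_of_cycleType, sign_of_cycleType, hx, hc]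
    decide
  rw [sign_of_cycleType] at hs
  by_contra h
  rw [Nat.not_odd_iff_even] at h
  rw [h.neg_one_pow] at hs
  exact absurd hs (by decide)

-- case: support x ⊆ support c
lemma caseC {x c : Perm (Fin n)} (hx : x.cycleType = {2}) (hc : c.cycleType = {3})
    (h : x.support ⊆ c.support) : (x * c).cycleType = {2} := by
  refine sum3_odd _ (fun a ha => two_le_of_mem_cycleType ha) ?_ (odd_mul hx hc)
  rw [sum_cycleType]
  have h1 : (x * c).support ⊆ c.support := by
    refine subset_trans (support_mul_le x c) ?_
    exact sup_le h le_rfl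
  have := card_le_card h1
  have hc3 : c.support.card = 3 := by rw [← sum_cycleType, hc]; rfl
  omega

-- case: disjoint supports
lemma caseA {x c : Perm (Fin n)} (hx : x.cycleType = {2}) (hc : c.cycleType = {3})
    (h : Disjoint x.support c.support) : (x * c).cycleType = {3, 2} := by
  have hd : Perm.Disjoint x c := disjoint_iff_disjoint_support.mpr h
  rw [hd.cycleType_mul, hx, hc]
  decide

-- helper for one common point
lemma caseB' {c : Perm (Fin n)} (hc : c.cycleType = {3}) (a b : Fin n) (hab : a ≠ b)
    (has : a ∈ c.support) (hbs : b ∉ c.support) :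
    (Equiv.swap a b * c).cycleType = {4} := by
  have hx : (Equiv.swap a b).cycleType = {2} := by
    have : (Equiv.swap a b).IsCycle := isCycle_swap hab
    rw [this.cycleType, support_swap hab, card_insert_of_notMem (by simp [hab]), card_singleton]
  set p := c a with hp
  set q := c p with hq
  have hc3 : c.support.card = 3 := by rw [← sum_cycleType, hc]; rfl
  have hcyc : c.IsCycle := by
    rw [← card_cycleType_eq_one, hc]; rfl
  have hord : c ^ 3 = 1 := by
    have : orderOf c = 3 := by rw [← lcm_cycleType, hc]; rfl
    rw [← this]; exact pow_orderOf_eq_one c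
  have hps : p ∈ c.support := apply_mem_support.mpr has
  have hqs : q ∈ c.support := apply_mem_support.mpr hps
  have hpa : p ≠ a := mem_support.mp has
  have hqp : q ≠ p := mem_support.mp hps
  have hcq : c q = a := by
    have h3 : c (c (c a)) = a := by
      have h := congrArg (fun f : Perm (Fin n) => f a) hord
      simpa [pow_succ, pow_zero, one_mul, Perm.mul_apply] using h
    rw [hq, hp]; exact h3
  have hqa : q ≠ a := fun h => hpa (by rw [← hcq, h, hp])
  have hpb : p ≠ b := fun h => hbs (h ▸ hps)
  have hqb : q ≠ b := fun h => hbs (h ▸ hqs)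
  have hcb : c b = b := notMem_support.mp hbs
  -- support of c is {a, p, q}
  have hapq : ({a, p, q} : Finset (Fin n)).card = 3 := by
    rw [card_insert_of_notMem (by simp [hpa.symm, hqa.symm]),
      card_insert_of_notMem (by simp [hqp.symm]), card_singleton]
  have hsupc : c.support = {a, p, q} := by
    refine (Finset.eq_of_subset_of_card_le ?_ ?_).symm
    · intro z hz
      simp only [mem_insert, mem_singleton] at hz
      rcases hz with rfl | rfl | rfl <;> assumption
    · rw [hc3, hapq]
  -- support of product
  have key : (Equiv.swap a b * c).support = {a, p, q, b} := by
    apply Finset.Subset.antisymm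
    · refine subset_trans (support_mul_le _ _) ?_
      rw [support_swap hab, hsupc]
      intro z; simp only [sup_eq_union, mem_union, mem_insert, mem_singleton]; tauto
    · intro z hz
      simp only [mem_insert, mem_singleton] at hz
      have swap_ne : ∀ w : Fin n, w ≠ a → w ≠ b → Equiv.swap a b w = w := fun w h1 h2 =>
        Equiv.swap_apply_of_ne_of_ne h1 h2
      rcases hz with rfl | rfl | rfl | rfl <;> rw [mem_support] <;>
        simp only [Perm.mul_apply]
      · rw [← hp, swap_ne p hpa hpb]; exact hpa
      · rw [← hq, swap_ne q hqa hqb]; exact hqp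
      · rw [hcq, Equiv.swap_apply_left]; exact hqb.symm
      · rw [hcb, Equiv.swap_apply_right]; exact hab
  have hcard : (Equiv.swap a b * c).support.card = 4 := by
    rw [key]
    rw [card_insert_of_notMem (by simp [hpa.symm, hqa.symm, hab]),
      card_insert_of_notMem (by simp [hqp.symm, hpb]),
      card_insert_of_notMem (by simp [hqb]), card_singleton]
  refine sum4_odd _ (fun m hm => two_le_of_mem_cycleType hm) ?_ (odd_mul hx hc)
  rw [sum_cycleType, hcard]



lemma swap_cT {a b : Fin n} (hab : a ≠ b) : (Equiv.swap a b).cycleType = {2} := by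
  rw [(isCycle_swap hab).cycleType, support_swap hab,
    card_insert_of_notMem (by simp [hab]), card_singleton]

lemma cT2_iff {x : Perm (Fin n)} : x.cycleType = {2} ↔ x.IsSwap := by
  constructor
  · intro h
    rw [← card_support_eq_two, ← sum_cycleType, h]
    rfl
  · rintro ⟨a, b, hab, rfl⟩
    exact swap_cT hab

lemma supp2 {x : Perm (Fin n)} (h : x.cycleType = {2}) : x.support.card = 2 := by
  rw [← sum_cycleType, h]; rfl

lemma count2 {s : Finset (Fin n)} (hs : s.card = 3) :
    (univ.filter (fun x : Perm (Fin n) =>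
      x.cycleType = {2} ∧ (x.support ∩ s).card = 2)).card = 3 := by
  have h := Finset.card_bij (fun (x : Perm (Fin n)) _ => x.support)
    (s := univ.filter (fun x : Perm (Fin n) =>
      x.cycleType = {2} ∧ (x.support ∩ s).card = 2)) (t := s.powersetCard 2)
    ?_ ?_ ?_
  · rw [h, card_powersetCard, hs]
    decide
  · intro x hx
    simp only [mem_filter, mem_univ, true_and] at hx
    obtain ⟨h1, h2⟩ := hx
    rw [mem_powersetCard]
    have hsc := supp2 h1
    have : x.support ∩ s = x.support :=
      Finset.eq_of_subset_of_card_le inter_subset_left (by omega)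
    constructor
    · rw [← this]; exact inter_subset_right
    · exact hsc
  · intro x hx y hy hxy
    simp only [mem_filter, mem_univ, true_and] at hx hy
    obtain ⟨a, b, hab, rfl⟩ := cT2_iff.mp hx.1
    obtain ⟨a', b', hab', rfl⟩ := cT2_iff.mp hy.1
    rw [support_swap hab, support_swap hab'] at hxy
    have ha : a = a' ∨ a = b' := by
      have : a ∈ ({a', b'} : Finset (Fin n)) := hxy ▸ (by simp)
      simpa using this
    have hb : b = a' ∨ b = b' := by
      have : b ∈ ({a', b'} : Finset (Fin n)) := hxy ▸ (by simp)
      simpa using this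
    rcases ha with rfl | rfl
    · rcases hb with rfl | rfl
      · exact absurd rfl hab
      · rfl
    · rcases hb with rfl | rfl
      · exact Equiv.swap_comm _ _
      · exact absurd rfl hab
  · intro p hp
    rw [mem_powersetCard] at hp
    obtain ⟨a, b, hab, rfl⟩ := Finset.card_eq_two.mp hp.2
    refine ⟨Equiv.swap a b, ?_, ?_⟩
    · simp only [mem_filter, mem_univ, true_and]
      refine ⟨swap_cT hab, ?_⟩
      have : ({a, b} : Finset (Fin n)) ⊆ s := hp.1
      rw [support_swap hab, Finset.inter_eq_left.mpr this]
      simp [hab]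
    · exact support_swap hab

lemma count0 {s : Finset (Fin n)} (hs : s.card = 3) :
    (univ.filter (fun x : Perm (Fin n) =>
      x.cycleType = {2} ∧ (x.support ∩ s).card = 0)).card = (n - 3).choose 2 := by
  have h := Finset.card_bij (fun (x : Perm (Fin n)) _ => x.support)
    (s := univ.filter (fun x : Perm (Fin n) =>
      x.cycleType = {2} ∧ (x.support ∩ s).card = 0)) (t := sᶜ.powersetCard 2)
    ?_ ?_ ?_
  · rw [h, card_powersetCard, card_compl, hs, Fintype.card_fin]
  · intro x hx
    simp only [mem_filter, mem_univ, true_and] at hx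
    obtain ⟨h1, h2⟩ := hx
    rw [mem_powersetCard]
    rw [Finset.card_eq_zero] at h2
    refine ⟨?_, supp2 h1⟩
    intro z hz
    rw [Finset.mem_compl]
    intro hzs
    have : z ∈ x.support ∩ s := Finset.mem_inter.mpr ⟨hz, hzs⟩
    rw [h2] at this
    exact absurd this (Finset.notMem_empty z)
  · intro x hx y hy hxy
    simp only [mem_filter, mem_univ, true_and] at hx hy
    obtain ⟨a, b, hab, rfl⟩ := cT2_iff.mp hx.1
    obtain ⟨a', b', hab', rfl⟩ := cT2_iff.mp hy.1
    rw [support_swap hab, support_swap hab'] at hxy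
    have ha : a = a' ∨ a = b' := by
      have : a ∈ ({a', b'} : Finset (Fin n)) := hxy ▸ (by simp)
      simpa using this
    have hb : b = a' ∨ b = b' := by
      have : b ∈ ({a', b'} : Finset (Fin n)) := hxy ▸ (by simp)
      simpa using this
    rcases ha with rfl | rfl
    · rcases hb with rfl | rfl
      · exact absurd rfl hab
      · rfl
    · rcases hb with rfl | rfl
      · exact Equiv.swap_comm _ _
      · exact absurd rfl hab
  · intro p hp
    rw [mem_powersetCard] at hp
    obtain ⟨a, b, hab, rfl⟩ := Finset.card_eq_two.mp hp.2
    refine ⟨Equiv.swap a b, ?_, ?_⟩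
    · simp only [mem_filter, mem_univ, true_and]
      refine ⟨swap_cT hab, ?_⟩
      rw [support_swap hab, Finset.card_eq_zero, ← Finset.disjoint_iff_inter_eq_empty]
      rw [Finset.disjoint_left]
      intro z hz hzs
      exact (Finset.mem_compl.mp (hp.1 hz)) hzs
    · exact support_swap hab

lemma count1 {s : Finset (Fin n)} (hs : s.card = 3) :
    (univ.filter (fun x : Perm (Fin n) =>
      x.cycleType = {2} ∧ (x.support ∩ s).card = 1)).card = 3 * (n - 3) := by
  have h := Finset.card_bij (fun (p : Fin n × Fin n) _ => Equiv.swap p.1 p.2)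
    (s := s ×ˢ sᶜ)
    (t := univ.filter (fun x : Perm (Fin n) =>
      x.cycleType = {2} ∧ (x.support ∩ s).card = 1))
    ?_ ?_ ?_
  · rw [← h, Finset.card_product, card_compl, hs, Fintype.card_fin]
  · rintro ⟨a, b⟩ hp
    rw [Finset.mem_product, Finset.mem_compl] at hp
    obtain ⟨has, hbs⟩ := hp
    have hab : a ≠ b := fun h => hbs (h ▸ has)
    dsimp only
    simp only [mem_filter, mem_univ, true_and]
    refine ⟨swap_cT hab, ?_⟩
    rw [support_swap hab]
    have : ({a, b} : Finset (Fin n)) ∩ s = {a} := by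
      ext z
      simp only [Finset.mem_inter, Finset.mem_insert, Finset.mem_singleton]
      constructor
      · rintro ⟨rfl | rfl, hzs⟩
        · rfl
        · exact absurd hzs hbs
      · rintro rfl
        exact ⟨Or.inl rfl, has⟩
    rw [this, card_singleton]
  · rintro ⟨a, b⟩ hp ⟨a', b'⟩ hp' hpp
    rw [Finset.mem_product, Finset.mem_compl] at hp hp'
    obtain ⟨has, hbs⟩ := hp
    obtain ⟨has', hbs'⟩ := hp'
    have hab : a ≠ b := fun h => hbs (h ▸ has)
    have hab' : a' ≠ b' := fun h => hbs' (h ▸ has')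
    dsimp only at hpp
    have hsupp := congrArg Equiv.Perm.support hpp
    rw [support_swap hab, support_swap hab'] at hsupp
    have ha : a = a' ∨ a = b' := by
      have : a ∈ ({a', b'} : Finset (Fin n)) := hsupp ▸ (by simp)
      simpa using this
    have hb : b = a' ∨ b = b' := by
      have : b ∈ ({a', b'} : Finset (Fin n)) := hsupp ▸ (by simp)
      simpa using this
    have ha2 : a = a' := by
      rcases ha with rfl | rfl
      · rfl
      · exact absurd has hbs'
    have hb2 : b = b' := by
      rcases hb with rfl | rfl
      · exact absurd has' hbs
      · rfl
    rw [ha2, hb2]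
  · intro x hx
    simp only [mem_filter, mem_univ, true_and] at hx
    obtain ⟨h1, h2⟩ := hx
    obtain ⟨a, b, hab, rfl⟩ := cT2_iff.mp h1
    rw [support_swap hab] at h2
    have hcases : (a ∈ s ∧ b ∉ s) ∨ (a ∉ s ∧ b ∈ s) := by
      by_cases has : a ∈ s <;> by_cases hbs : b ∈ s
      · exfalso
        have : ({a, b} : Finset (Fin n)) ∩ s = {a, b} :=
          Finset.inter_eq_left.mpr (by intro z hz; simp only [Finset.mem_insert,
            Finset.mem_singleton] at hz; rcases hz with rfl | rfl <;> assumption)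
        rw [this, card_insert_of_notMem (by simp [hab]), card_singleton] at h2
        omega
      · exact Or.inl ⟨has, hbs⟩
      · exact Or.inr ⟨has, hbs⟩
      · exfalso
        have : ({a, b} : Finset (Fin n)) ∩ s = ∅ := by
          rw [← Finset.disjoint_iff_inter_eq_empty, Finset.disjoint_left]
          intro z hz
          simp only [Finset.mem_insert, Finset.mem_singleton] at hz
          rcases hz with rfl | rfl <;> assumption
        rw [this, Finset.card_empty] at h2
        omega
    rcases hcases with ⟨has, hbs⟩ | ⟨has, hbs⟩
    · exact ⟨(a, b), Finset.mem_product.mpr ⟨has, Finset.mem_compl.mpr hbs⟩, rfl⟩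
    · exact ⟨(b, a), Finset.mem_product.mpr ⟨hbs, Finset.mem_compl.mpr has⟩,
        (Equiv.swap_comm a b).symm⟩

lemma two_mul_choose_two (m : ℕ) : 2 * m.choose 2 = m * (m - 1) := by
  induction m with
  | zero => rfl
  | succ k ih =>
    rw [Nat.choose_succ_succ, Nat.choose_one_right]
    cases k with
    | zero => rfl
    | succ j => simp only [Nat.succ_sub_one] at *; ring_nf; ring_nf at ih; omega

end Helpers

open CategoryTheory Equiv Equiv.Perm Finset

/-- For all `n ≥ 6` and every complex irreducible character `χ` of `S_n`, with `u` of cycle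
type `(3,2)`, `f` a 4-cycle, `c` a 3-cycle and `t` a transposition:
`χ((3,2))/χ(1) + (6/(n−4))·χ((4))/χ(1) − (n(n−1)/((n−3)(n−4)))·(χ((3))/χ(1))·(χ((2))/χ(1))
 + (6/((n−3)(n−4)))·χ((2))/χ(1) = 0`. -/
theorem stmt19 (n : ℕ) (hn : 6 ≤ n) (V : FDRep ℂ (Equiv.Perm (Fin n)))
    [CategoryTheory.Simple V]
    (u f c t : Equiv.Perm (Fin n)) (hu : u.cycleType = {3, 2}) (hf : f.cycleType = {4})
    (hc : c.cycleType = {3}) (ht : t.cycleType = {2}) :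
    V.character u / V.character 1
      + (6 / ((n : ℂ) - 4)) * (V.character f / V.character 1)
      - ((n : ℂ) * ((n : ℂ) - 1) / (((n : ℂ) - 3) * ((n : ℂ) - 4))) *
          ((V.character c / V.character 1) * (V.character t / V.character 1))
      + (6 / (((n : ℂ) - 3) * ((n : ℂ) - 4))) * (V.character t / V.character 1) = 0 := by
  classical
  by_cases hone : V.character 1 = 0
  · simp [hone]
  have chareq : ∀ a b : Perm (Fin n), a.cycleType = b.cycleType →
      V.character a = V.character b := by
    intro a b h
    obtain ⟨g, hg⟩ := isConj_iff.mp (isConj_of_cycleType_eq h)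
    rw [← hg, FDRep.char_conj]
  set s := c.support with hsdef
  have hs3 : s.card = 3 := by rw [hsdef, ← sum_cycleType, hc]; rfl
  set S := univ.filter (fun x : Perm (Fin n) => x.cycleType = {2}) with hSdef
  have hSconj : ∀ g : Perm (Fin n), ∀ x ∈ S, g * x * g⁻¹ ∈ S := by
    intro g x hx
    simp only [hSdef, mem_filter, mem_univ, true_and] at hx ⊢
    rw [cycleType_conj, hx]
  have E := classsum V S hSconj c
  -- sum of characters over S
  have hsum1 : (∑ x ∈ S, V.character x) = (S.card : ℂ) * V.character t := by
    rw [Finset.sum_congr rfl (fun x hx => chareq x t (by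
      simpa only [hSdef, mem_filter, mem_univ, true_and, ht] using hx))]
    rw [Finset.sum_const, nsmul_eq_mul]
  -- split the sum over products
  have hsplit : ∀ F : Perm (Fin n) → ℂ, (∑ x ∈ S, F x) =
      (∑ x ∈ univ.filter (fun x : Perm (Fin n) =>
        x.cycleType = {2} ∧ (x.support ∩ s).card = 0), F x)
      + (∑ x ∈ univ.filter (fun x : Perm (Fin n) =>
        x.cycleType = {2} ∧ (x.support ∩ s).card = 1), F x)
      + (∑ x ∈ univ.filter (fun x : Perm (Fin n) =>
        x.cycleType = {2} ∧ (x.support ∩ s).card = 2), F x) := by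
    intro F
    have hb : ∀ x : Perm (Fin n), x.cycleType = {2} → (x.support ∩ s).card ≤ 2 := by
      intro x h1
      have := Finset.card_le_card (Finset.inter_subset_left (s₁ := x.support) (s₂ := s))
      rw [supp2 h1] at this
      exact this
    rw [hSdef, ← Finset.sum_filter_add_sum_filter_not
        (univ.filter fun x : Perm (Fin n) => x.cycleType = {2})
        (fun x => (x.support ∩ s).card = 0) F,
      ← Finset.sum_filter_add_sum_filter_not
        ((univ.filter fun x : Perm (Fin n) => x.cycleType = {2}).filter
          (fun x => ¬ (x.support ∩ s).card = 0))
        (fun x => (x.support ∩ s).card = 1) F,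
      add_assoc]
    simp only [Finset.filter_filter]
    congr 1
    congr 1
    · refine Finset.sum_congr (Finset.filter_congr fun x _ => ?_) (fun _ _ => rfl)
      constructor
      · rintro ⟨⟨h1, _⟩, h3⟩
        exact ⟨h1, h3⟩
      · rintro ⟨h1, h3⟩
        exact ⟨⟨h1, by omega⟩, h3⟩
    · refine Finset.sum_congr (Finset.filter_congr fun x _ => ?_) (fun _ _ => rfl)
      constructor
      · rintro ⟨⟨h1, h2⟩, h3⟩
        have := hb x h1
        exact ⟨h1, by omega⟩
      · rintro ⟨h1, h2⟩
        exact ⟨⟨h1, by omega⟩, by omega⟩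
  -- values on each part
  have hval0 : (∑ x ∈ univ.filter (fun x : Perm (Fin n) =>
      x.cycleType = {2} ∧ (x.support ∩ s).card = 0), V.character (x * c))
      = ((n - 3).choose 2 : ℂ) * V.character u := by
    rw [Finset.sum_congr rfl (fun x hx => chareq (x * c) u ?_), Finset.sum_const,
      nsmul_eq_mul, count0 hs3]
    simp only [mem_filter, mem_univ, true_and] at hx
    rw [hu]
    refine caseA hx.1 hc ?_
    rw [Finset.disjoint_iff_inter_eq_empty, ← Finset.card_eq_zero]
    exact hx.2
  have hval1 : (∑ x ∈ univ.filter (fun x : Perm (Fin n) =>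
      x.cycleType = {2} ∧ (x.support ∩ s).card = 1), V.character (x * c))
      = (3 * (n - 3) : ℕ) * V.character f := by
    rw [Finset.sum_congr rfl (fun x hx => chareq (x * c) f ?_), Finset.sum_const,
      nsmul_eq_mul, count1 hs3]
    simp only [mem_filter, mem_univ, true_and] at hx
    obtain ⟨h1, h2⟩ := hx
    rw [hf]
    obtain ⟨a, b, hab, rfl⟩ := cT2_iff.mp h1
    rw [support_swap hab] at h2
    have hcases : (a ∈ s ∧ b ∉ s) ∨ (a ∉ s ∧ b ∈ s) := by
      by_cases has : a ∈ s <;> by_cases hbs : b ∈ s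
      · exfalso
        have : ({a, b} : Finset (Fin n)) ∩ s = {a, b} :=
          Finset.inter_eq_left.mpr (by intro z hz; simp only [Finset.mem_insert,
            Finset.mem_singleton] at hz; rcases hz with rfl | rfl <;> assumption)
        rw [this, card_insert_of_notMem (by simp [hab]), card_singleton] at h2
        omega
      · exact Or.inl ⟨has, hbs⟩
      · exact Or.inr ⟨has, hbs⟩
      · exfalso
        have : ({a, b} : Finset (Fin n)) ∩ s = ∅ := by
          rw [← Finset.disjoint_iff_inter_eq_empty, Finset.disjoint_left]
          intro z hz
          simp only [Finset.mem_insert, Finset.mem_singleton] at hz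
          rcases hz with rfl | rfl <;> assumption
        rw [this, Finset.card_empty] at h2
        omega
    rcases hcases with ⟨has, hbs⟩ | ⟨has, hbs⟩
    · exact caseB' hc a b hab has hbs
    · rw [Equiv.swap_comm]
      exact caseB' hc b a (Ne.symm hab) hbs has
  have hval2 : (∑ x ∈ univ.filter (fun x : Perm (Fin n) =>
      x.cycleType = {2} ∧ (x.support ∩ s).card = 2), V.character (x * c))
      = (3 : ℕ) * V.character t := by
    rw [Finset.sum_congr rfl (fun x hx => chareq (x * c) t ?_), Finset.sum_const,
      nsmul_eq_mul, count2 hs3]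
    simp only [mem_filter, mem_univ, true_and] at hx
    obtain ⟨h1, h2⟩ := hx
    rw [ht]
    refine caseC h1 hc ?_
    have hsc := supp2 h1
    have : x.support ∩ s = x.support :=
      Finset.eq_of_subset_of_card_le Finset.inter_subset_left (by omega)
    rw [← this]
    exact Finset.inter_subset_right
  -- cardinality of S
  have hScard : (S.card : ℂ) = ((n - 3).choose 2 : ℂ) + (3 * (n - 3) : ℕ) + (3 : ℕ) := by
    have := hsplit (fun _ => (1 : ℂ))
    simp only [Finset.sum_const, nsmul_eq_mul, mul_one] at this
    rw [count0 hs3, count1 hs3, count2 hs3] at this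
    exact_mod_cast this
  rw [hsplit (fun x => V.character (x * c)), hval0, hval1, hval2, hsum1, hScard] at E
  -- cast the counts
  have h3n : ((n : ℂ) - 3) = ((n - 3 : ℕ) : ℂ) := by
    rw [Nat.cast_sub (by omega)]
    norm_num
  have h4n : ((n : ℂ) - 4) = ((n - 4 : ℕ) : ℂ) := by
    rw [Nat.cast_sub (by omega)]
    norm_num
  have hchoose : (((n - 3).choose 2 : ℕ) : ℂ) = ((n : ℂ) - 3) * ((n : ℂ) - 4) / 2 := by
    have h2 := two_mul_choose_two (n - 3)
    have hsub : n - 3 - 1 = n - 4 := by omega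
    rw [hsub] at h2
    rw [eq_div_iff (by norm_num : (2 : ℂ) ≠ 0), h3n, h4n]
    exact_mod_cast (by omega : (n-3).choose 2 * 2 = (n-3) * (n-4))
  have hc1 : ((3 * (n - 3) : ℕ) : ℂ) = 3 * ((n : ℂ) - 3) := by
    push_cast [Nat.cast_sub (by omega : 3 ≤ n)]
    ring
  rw [hchoose, hc1] at E
  push_cast at E
  -- nonvanishing
  have hne3 : ((n : ℂ) - 3) ≠ 0 := by
    rw [h3n, Ne, Nat.cast_eq_zero]
    omega
  have hne4 : ((n : ℂ) - 4) ≠ 0 := by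
    rw [h4n, Ne, Nat.cast_eq_zero]
    omega
  set d : ℂ := V.character 1 with hd
  set N : ℂ := (n : ℂ) with hN
  set cu := V.character u
  set cf := V.character f
  set cc := V.character c
  set ct := V.character t
  have key : d * ((N-3)*(N-4)/2 * cu + 3*(N-3)*cf + 3*ct)
      = (((N-3)*(N-4)/2) + 3*(N-3) + 3) * ct * cc := E
  have hd0 : d ≠ 0 := hone
  have hD : d ^ 2 * ((N - 3) * (N - 4)) ≠ 0 :=
    mul_ne_zero (pow_ne_zero 2 hd0) (mul_ne_zero hne3 hne4)
  have t1 : cu / d = (cu * d * ((N-3)*(N-4))) / (d ^ 2 * ((N - 3) * (N - 4))) := by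
    rw [div_eq_div_iff hd0 hD]; ring
  have t2 : (6 / (N - 4)) * (cf / d)
      = (6 * cf * d * (N-3)) / (d ^ 2 * ((N - 3) * (N - 4))) := by
    rw [div_mul_div_comm, div_eq_div_iff (mul_ne_zero hne4 hd0) hD]; ring
  have t3 : (N * (N - 1) / ((N - 3) * (N - 4))) * ((cc / d) * (ct / d))
      = (N * (N - 1) * cc * ct) / (d ^ 2 * ((N - 3) * (N - 4))) := by
    rw [div_mul_div_comm, div_mul_div_comm,
      div_eq_div_iff (mul_ne_zero (mul_ne_zero hne3 hne4) (mul_ne_zero hd0 hd0)) hD]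
    ring
  have t4 : (6 / ((N - 3) * (N - 4))) * (ct / d)
      = (6 * ct * d) / (d ^ 2 * ((N - 3) * (N - 4))) := by
    rw [div_mul_div_comm, div_eq_div_iff (mul_ne_zero (mul_ne_zero hne3 hne4) hd0) hD]; ring
  rw [t1, t2, t3, t4, ← add_div, div_sub_div_same, ← add_div,
    div_eq_zero_iff]
  left
  linear_combination 2 * key
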